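/- arXiv:2103.06037 — 4 statements merged into one kernel-verified Lean document; each statement's English description precedes it below -/
import Mathlib

section
/- If nonzero real numbers Γ₁, Γ₂, Γ₃, Γ₄ satisfy 1/Γ₁ + 1/Γ₂ + 1/Γ₃ = 0 and 1/Γ₁ + 1/Γ₂ + 1/Γ₄ = 0, then Γ₃ = Γ₄ and Γ₁ + Γ₂ + Γ₃ + Γ₄ ≠ 0. -/
theorem diagramVIII_vorticity_constraints
    (Γ₁ Γ₂ Γ₃ Γ₄ : ℝ) (h₁ : Γ₁ ≠ 0) (h₂ : Γ₂ ≠ 0) (h₃ : Γ₃ ≠ 0) (h₄ : Γ₄ ≠ 0)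
    (ha : 1/Γ₁ + 1/Γ₂ + 1/Γ₃ = 0) (hb : 1/Γ₁ + 1/Γ₂ + 1/Γ₄ = 0) :
    Γ₃ = Γ₄ ∧ Γ₁ + Γ₂ + Γ₃ + Γ₄ ≠ 0 := by
  have h34 : Γ₃ = Γ₄ := by
    have : (1:ℝ)/Γ₃ = 1/Γ₄ := by linarith
    field_simp at this
    linarith
  refine ⟨h34, ?_⟩
  intro hs
  subst h34
  have ha' : Γ₂*Γ₃ + Γ₁*Γ₃ + Γ₁*Γ₂ = 0 := by
    field_simp at ha; linarith
  have hΓ₂ : Γ₂ = -2*Γ₃ - Γ₁ := by linarith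
  subst hΓ₂
  have : (Γ₁ + Γ₃)^2 + Γ₃^2 = 0 := by nlinarith
  have : Γ₃ = 0 := by nlinarith [sq_nonneg (Γ₁ + Γ₃)]
  exact h₃ this
end

section
/- The only real solutions (Γ₁, Γ₂, Γ₃, Γ₄) with all Γᵢ nonzero of the system Γ₁Γ₃ = Γ₂Γ₄, Γ₁Γ₄ = Γ₂Γ₃, and Γ₁Γ₂ + Γ₂Γ₃ + Γ₃Γ₁ + Γ₄(Γ₁+Γ₂+Γ₃) = 0, are given by Γ₁ = Γ₂ and Γ₃ = Γ₄ = (−2−√3)Γ₁ or Γ₃ = Γ₄ = (−2+√3)Γ₁. -/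
theorem collapse_exceptional_vorticities
    (Γ₁ Γ₂ Γ₃ Γ₄ : ℝ) (h₁ : Γ₁ ≠ 0) (h₂ : Γ₂ ≠ 0) (h₃ : Γ₃ ≠ 0) (h₄ : Γ₄ ≠ 0) :
    (Γ₁*Γ₃ = Γ₂*Γ₄ ∧ Γ₁*Γ₄ = Γ₂*Γ₃ ∧
      Γ₁*Γ₂ + Γ₂*Γ₃ + Γ₃*Γ₁ + Γ₄*(Γ₁+Γ₂+Γ₃) = 0) ↔
    (Γ₁ = Γ₂ ∧
      ((Γ₃ = Γ₄ ∧ Γ₃ = (-2 - Real.sqrt 3) * Γ₁) ∨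
       (Γ₃ = Γ₄ ∧ Γ₃ = (-2 + Real.sqrt 3) * Γ₁))) := by
  have hs : Real.sqrt 3 ^ 2 = 3 := Real.sq_sqrt (by norm_num)
  constructor
  · rintro ⟨e1, e2, e3⟩
    have hA : (Γ₁ + Γ₂) * (Γ₃ - Γ₄) = 0 := by ring_nf; linear_combination e1 - e2
    have hB : (Γ₁ - Γ₂) * (Γ₃ + Γ₄) = 0 := by ring_nf; linear_combination e1 + e2
    rcases mul_eq_zero.mp hA with hA | hA
    · rcases mul_eq_zero.mp hB with hB | hB
      · exfalso; apply h₁; linarith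
      · exfalso
        have h2' : Γ₂ = -Γ₁ := by linarith
        have h4' : Γ₄ = -Γ₃ := by linarith
        have hq : Γ₁ ^ 2 + Γ₃ ^ 2 = 0 := by
          subst h2' h4'; linear_combination -e3
        nlinarith [mul_self_pos.mpr h₁, sq_nonneg Γ₃]
    · have h34 : Γ₃ = Γ₄ := by linarith
      have h12 : Γ₁ = Γ₂ := by
        rcases mul_eq_zero.mp hB with hB | hB
        · linarith
        · exfalso; apply h₃; linarith
      refine ⟨h12, ?_⟩
      have hq : (Γ₃ - (-2 - Real.sqrt 3) * Γ₁) * (Γ₃ - (-2 + Real.sqrt 3) * Γ₁) = 0 := by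
        have : Γ₁ ^ 2 + 4 * Γ₁ * Γ₃ + Γ₃ ^ 2 = 0 := by
          have e3' := e3
          rw [← h12, ← h34] at e3'
          linear_combination e3'
        nlinarith [this, hs]
      rcases mul_eq_zero.mp hq with hq | hq
      · exact Or.inl ⟨h34, by linarith⟩
      · exact Or.inr ⟨h34, by linarith⟩
  · rintro ⟨h12, ⟨h34, h3⟩ | ⟨h34, h3⟩⟩ <;>
      refine ⟨by rw [h12, h34], by rw [h12, h34], ?_⟩ <;>
      · subst h12 h34 h3; nlinarith [hs]
end

section
/- There are no real numbers Γ₁, Γ₂, Γ₃, Γ₄ satisfying simultaneously (Γ₁−Γ₂)(Γ₃−Γ₄)(Γ₁+Γ₂+Γ₃+Γ₄) = 0, Γ₁Γ₂ − Γ₃Γ₄ = 0, (Γ₁Γ₃ − Γ₂Γ₄)(Γ₁Γ₄ − Γ₂Γ₃) ≠ 0, and Γ₁Γ₂+Γ₂Γ₃+Γ₃Γ₁+Γ₄(Γ₁+Γ₂+Γ₃) = 0, with all Γᵢ nonzero. -/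
theorem no_common_solution_collapse_claim :
    ¬ ∃ Γ₁ Γ₂ Γ₃ Γ₄ : ℝ, Γ₁ ≠ 0 ∧ Γ₂ ≠ 0 ∧ Γ₃ ≠ 0 ∧ Γ₄ ≠ 0 ∧
      (Γ₁ - Γ₂) * (Γ₃ - Γ₄) * (Γ₁ + Γ₂ + Γ₃ + Γ₄) = 0 ∧
      Γ₁*Γ₂ - Γ₃*Γ₄ = 0 ∧
      (Γ₁*Γ₃ - Γ₂*Γ₄) * (Γ₁*Γ₄ - Γ₂*Γ₃) ≠ 0 ∧
      Γ₁*Γ₂ + Γ₂*Γ₃ + Γ₃*Γ₁ + Γ₄*(Γ₁+Γ₂+Γ₃) = 0 := by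
  rintro ⟨a, b, c, d, ha, hb, hc, hd, h1, h2, h3, h4⟩
  rcases mul_eq_zero.1 h1 with h | hs
  · rcases mul_eq_zero.1 h with hab | hcd
    · -- a = b
      have hab' : a = b := by linarith [sub_eq_zero.1 hab]
      subst hab'
      -- c*d = a^2, and h4 gives a + c + d = 0
      have hcd : c * d = a * a := by linarith
      have hsum : a + c + d = 0 := by
        have h4' : 2 * a * (a + c + d) = 0 := by nlinarith
        have : a * (a + c + d) = 0 := by linarith
        rcases mul_eq_zero.1 this with h | h
        · exact absurd h ha
        · exact h
      nlinarith [sq_nonneg (c - d), sq_nonneg a, mul_self_pos.2 ha]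
    · -- c = d
      have hcd' : c = d := by linarith [sub_eq_zero.1 hcd]
      subst hcd'
      have hab : a * b = c * c := by linarith
      have hsum : a + b + c = 0 := by
        have : c * (a + b + c) = 0 := by nlinarith
        rcases mul_eq_zero.1 this with h | h
        · exact absurd h hc
        · exact h
      nlinarith [sq_nonneg (a - b), mul_self_pos.2 hc]
  · -- a + b + c + d = 0
    have hd' : d = -(a + b + c) := by linarith
    subst hd'
    have : c * c + (a + b + c) * (a + b + c) = 0 := by nlinarith
    nlinarith [sq_nonneg c, sq_nonneg (a + b + c), mul_self_pos.2 hc]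
end

section
/- Let Γ₁,…,Γ_N be nonzero real numbers and z₁,…,z_N distinct complex numbers. If the configuration is an equilibrium, i.e., Σ_{j≠n} Γⱼ/(conj(z_n) − conj(z_j)) = 0 for all n, then L = Σ_{j<k} ΓⱼΓₖ = 0. -/
open Finset

theorem equilibrium_implies_L_zero
    (N : ℕ) (Γ : Fin N → ℝ) (hΓ : ∀ n, Γ n ≠ 0)
    (z : Fin N → ℂ) (hz : Function.Injective z)
    (heq : ∀ n, ∑ j ∈ Finset.univ.erase n,
      (Γ j : ℂ) / (starRingEnd ℂ (z n) - starRingEnd ℂ (z j)) = 0) :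
    ∑ p ∈ Finset.univ.filter (fun p : Fin N × Fin N => p.1 < p.2),
      Γ p.1 * Γ p.2 = 0 := by
  -- conjugated equilibrium
  have hconj : ∀ n, ∑ j ∈ Finset.univ.erase n, (Γ j : ℂ) / (z n - z j) = 0 := by
    intro n
    have := congrArg (starRingEnd ℂ) (heq n)
    simpa [map_sum, map_div₀, map_sub, Complex.conj_conj] using this
  set F : Fin N × Fin N → ℂ := fun p =>
    (Γ p.1 : ℂ) * Γ p.2 * (z p.1 / (z p.1 - z p.2)) with hF
  have hS : ∑ p ∈ Finset.univ.filter (fun p : Fin N × Fin N => p.1 ≠ p.2), F p = 0 := by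
    have : ∑ p ∈ Finset.univ.filter (fun p : Fin N × Fin N => p.1 ≠ p.2), F p
        = ∑ n : Fin N, (Γ n : ℂ) * z n *
            ∑ j ∈ Finset.univ.erase n, (Γ j : ℂ) / (z n - z j) := by
      rw [Finset.sum_filter, ← Finset.univ_product_univ, Finset.sum_product]
      refine Finset.sum_congr rfl fun n _ => ?_
      rw [Finset.mul_sum]
      rw [show (Finset.univ.erase n) = Finset.univ.filter (fun j => j ≠ n) by
        ext j; simp [Finset.mem_erase, and_comm]]
      rw [Finset.sum_filter]
      refine Finset.sum_congr rfl fun j _ => ?_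
      by_cases h : n = j
      · simp [h]
      · simp only [h, Ne.symm h, if_true, ne_eq, not_false_eq_true, hF]
        ring
    rw [this]
    simp [hconj]
  have hsplit : (Finset.univ.filter (fun p : Fin N × Fin N => p.1 ≠ p.2))
      = (Finset.univ.filter (fun p : Fin N × Fin N => p.1 < p.2)) ∪
        (Finset.univ.filter (fun p : Fin N × Fin N => p.2 < p.1)) := by
    ext p
    simp only [Finset.mem_filter, Finset.mem_union, Finset.mem_univ, true_and]
    exact ne_iff_lt_or_gt
  have hdisj : Disjoint (Finset.univ.filter (fun p : Fin N × Fin N => p.1 < p.2))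
      (Finset.univ.filter (fun p : Fin N × Fin N => p.2 < p.1)) := by
    rw [Finset.disjoint_filter]
    intro p _ h
    simp [not_lt, le_of_lt h]
  have hswap : ∑ p ∈ Finset.univ.filter (fun p : Fin N × Fin N => p.2 < p.1), F p
      = ∑ p ∈ Finset.univ.filter (fun p : Fin N × Fin N => p.1 < p.2), F p.swap := by
    refine Finset.sum_nbij' (fun p => Prod.swap p) (fun p => Prod.swap p) ?_ ?_ ?_ ?_ ?_ <;>
      simp [Prod.swap]
  have hmain : ∑ p ∈ Finset.univ.filter (fun p : Fin N × Fin N => p.1 < p.2),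
      ((Γ p.1 : ℂ) * Γ p.2) = 0 := by
    rw [hsplit, Finset.sum_union hdisj, hswap, ← Finset.sum_add_distrib] at hS
    rw [← hS]
    refine Finset.sum_congr rfl fun p hp => ?_
    simp only [Finset.mem_filter] at hp
    have hne : z p.1 - z p.2 ≠ 0 := sub_ne_zero.mpr (fun h => hp.2.ne (hz h))
    have hne' : z p.2 - z p.1 ≠ 0 := sub_ne_zero.mpr (fun h => hp.2.ne' (hz h))
    simp only [hF, Prod.swap]
    field_simp
    ring
  have : ((∑ p ∈ Finset.univ.filter (fun p : Fin N × Fin N => p.1 < p.2),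
      Γ p.1 * Γ p.2 : ℝ) : ℂ) = 0 := by
    push_cast
    exact hmain
  exact_mod_cast this
end
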